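/- Let d ≥ 1 and let q₁, q₂ ∈ ℂ[z₀,z₁,z₂,z₃] be homogeneous polynomials of degree 2. Let f₀,…,f₃ ∈ ℂ[s,t] be homogeneous polynomials of degree d, not all zero, and let C ⊆ ℙ³(ℂ) be the image of the associated map, i.e., the set of points [f₀(a,b) : ⋯ : f₃(a,b)] over all (a,b) ∈ ℂ² with (f₀(a,b),…,f₃(a,b)) ≠ 0. Let B = {[z] ∈ ℙ³(ℂ) : q₁(z) = q₂(z) = 0} be the base locus of the pencil of quadrics spanned by q₁ and q₂. If C contains at least 2d distinct points of B and C is not contained in B, then there exists (λ, μ) ∈ ℂ² ∖ {(0,0)} such that the composite (λq₁ + μq₂)(f₀,…,f₃) is the zero polynomial; that is, C is contained in the quadric {[z] ∈ ℙ³(ℂ) : (λq₁ + μq₂)(z) = 0} belonging to the pencil. -/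

import Mathlib

open MvPolynomial

namespace CurvePencilAux

/-- Evaluating a homogeneous polynomial at a scalar multiple of a point. -/
lemma eval_smul_homog {σ : Type*} {h : MvPolynomial σ ℂ} {n : ℕ}
    (hh : h.IsHomogeneous n) (c : ℂ) (v : σ → ℂ) :
    eval (c • v) h = c ^ n * eval v h := by
  rw [eval_eq, eval_eq, Finset.mul_sum]
  refine Finset.sum_congr rfl fun m hm => ?_
  have hw := hh (Finsupp.mem_support_iff.mp hm)
  have hsum : ∑ i ∈ m.support, m i = n := by
    rw [← hw, Finsupp.weight_apply, Finsupp.sum]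
    simp
  have hprod : ∏ i ∈ m.support, ((c • v) i) ^ m i
      = c ^ n * ∏ i ∈ m.support, (v i) ^ m i := by
    rw [← hsum, ← Finset.prod_pow_eq_pow_sum, ← Finset.prod_mul_distrib]
    exact Finset.prod_congr rfl fun i _ => by simp [mul_pow]
  rw [hprod]; ring

/-- Composition of evaluation and `aeval`. -/
lemma eval_aeval' {σ τ : Type*} (f : σ → MvPolynomial τ ℂ) (q : MvPolynomial σ ℂ) (x : τ → ℂ) :
    eval x (aeval f q) = eval (fun i => eval x (f i)) q := by
  rw [aeval_def]
  have h1 := eval₂_comp_left (eval x) (algebraMap ℂ (MvPolynomial τ ℂ)) f q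
  have hc : (eval x : MvPolynomial τ ℂ →+* ℂ).comp (algebraMap ℂ (MvPolynomial τ ℂ))
      = RingHom.id ℂ := by
    ext r
    simp [MvPolynomial.algebraMap_eq]
  rw [hc] at h1
  simpa [Function.comp_def] using h1

/-- Evaluation of the univariate polynomial obtained by substitution. -/
lemma toUniv_eval {σ : Type*} (g : σ → Polynomial ℂ) (h : MvPolynomial σ ℂ) (x : ℂ) :
    (eval₂ Polynomial.C g h).eval x = eval (fun i => (g i).eval x) h := by
  have h1 := eval₂_comp_left (Polynomial.evalRingHom x) Polynomial.C g h
  have hc : (Polynomial.evalRingHom x).comp Polynomial.C = RingHom.id ℂ := by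
    ext r; simp
  rw [hc] at h1
  simpa [Polynomial.coe_evalRingHom, Function.comp_def] using h1

/-- Degree bound for substitution of polynomials of degree at most one into a homogeneous
polynomial. -/
lemma toUniv_natDegree_le {σ : Type*} {h : MvPolynomial σ ℂ} {n : ℕ} (hh : h.IsHomogeneous n)
    (g : σ → Polynomial ℂ) (hg : ∀ i, (g i).natDegree ≤ 1) :
    (eval₂ Polynomial.C g h).natDegree ≤ n := by
  rw [eval₂_eq]
  refine Polynomial.natDegree_sum_le_of_forall_le _ _ fun m hm => ?_
  have hw := hh (Finsupp.mem_support_iff.mp hm)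
  have hsum : ∑ i ∈ m.support, m i = n := by
    rw [← hw, Finsupp.weight_apply, Finsupp.sum]
    simp
  calc (Polynomial.C (coeff m h) * ∏ i ∈ m.support, g i ^ m i).natDegree
      ≤ (∏ i ∈ m.support, g i ^ m i).natDegree := Polynomial.natDegree_C_mul_le _ _
    _ ≤ ∑ i ∈ m.support, (g i ^ m i).natDegree := Polynomial.natDegree_prod_le _ _
    _ ≤ ∑ i ∈ m.support, m i := by
        refine Finset.sum_le_sum fun i _ => ?_
        calc (g i ^ m i).natDegree ≤ m i * (g i).natDegree := Polynomial.natDegree_pow_le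
          _ ≤ m i * 1 := Nat.mul_le_mul_left _ (hg i)
          _ = m i := Nat.mul_one _
    _ = n := hsum

/-- A bivariate homogeneous polynomial of degree `n` vanishing at `n+1` pairwise
non-proportional points, all with nonzero second coordinate, is zero. -/
lemma homog_eq_zero_of_zeros_snd_ne (n : ℕ) (hn : 1 ≤ n) (h : MvPolynomial (Fin 2) ℂ)
    (hh : h.IsHomogeneous n) (T : Finset (ℂ × ℂ))
    (hzero : ∀ p ∈ T, eval ![p.1, p.2] h = 0)
    (hb : ∀ p ∈ T, p.2 ≠ 0)
    (hprop : ∀ p ∈ T, ∀ q ∈ T, (∃ c : ℂ, q = c • p) → p = q)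
    (hcard : n + 1 ≤ T.card) : h = 0 := by
  classical
  set P := eval₂ Polynomial.C ![Polynomial.X, 1] h with hPdef
  have hPeval : ∀ x : ℂ, P.eval x = eval ![x, 1] h := by
    intro x
    rw [hPdef, toUniv_eval]
    have hfun : (fun i => Polynomial.eval x (![Polynomial.X, 1] i)) = ![x, 1] := by
      funext i; fin_cases i <;> simp
    rw [hfun]
  have hPdeg : P.natDegree ≤ n := by
    refine toUniv_natDegree_le hh _ fun i => ?_
    fin_cases i <;> simp
  have hvanish : ∀ a b : ℂ, b ≠ 0 → eval ![a, b] h = b ^ n * eval ![a / b, 1] h := by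
    intro a b hb0
    have hab : ![a, b] = b • ![a / b, 1] := by
      funext i
      fin_cases i <;> simp [mul_div_cancel₀, hb0, mul_comm]
    rw [hab, eval_smul_homog hh]
  have hinj : Set.InjOn (fun p : ℂ × ℂ => p.1 / p.2) ↑T := by
    intro p hp q hq hpq
    simp only at hpq
    have hp2 := hb p hp
    have hq2 := hb q hq
    refine hprop p hp q hq ⟨q.2 / p.2, ?_⟩
    have hpq' : p.1 * q.2 = q.1 * p.2 := by
      field_simp at hpq
      linear_combination hpq
    have h1 : q.1 = q.2 / p.2 * p.1 := by
      field_simp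
      linear_combination -hpq'
    have h2 : q.2 = q.2 / p.2 * p.2 := by
      field_simp
    calc q = (q.1, q.2) := rfl
      _ = (q.2 / p.2 * p.1, q.2 / p.2 * p.2) := by rw [← h1, ← h2]
      _ = (q.2 / p.2) • p := by rw [Prod.smul_def]; rfl
  have hP0 : P = 0 := by
    refine Polynomial.eq_zero_of_natDegree_lt_card_of_eval_eq_zero' P
      (T.image fun p => p.1 / p.2) ?_ ?_
    · intro r hr
      obtain ⟨p, hp, rfl⟩ := Finset.mem_image.mp hr
      have hb0 := hb p hp
      have hv := hvanish p.1 p.2 hb0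
      rw [hzero p hp] at hv
      have hbn : (p.2 : ℂ) ^ n ≠ 0 := pow_ne_zero _ hb0
      rw [hPeval]
      rcases mul_eq_zero.mp hv.symm with hcase | hcase
      · exact absurd hcase hbn
      · exact hcase
    · calc P.natDegree ≤ n := hPdeg
        _ < n + 1 := Nat.lt_succ_self _
        _ ≤ T.card := hcard
        _ = (T.image fun p => p.1 / p.2).card := (Finset.card_image_of_injOn hinj).symm
  have hx1 : ∀ x : ℂ, eval ![x, 1] h = 0 := by
    intro x
    rw [← hPeval, hP0, Polynomial.eval_zero]
  have hbne : ∀ a b : ℂ, b ≠ 0 → eval ![a, b] h = 0 := by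
    intro a b hb0
    rw [hvanish a b hb0, hx1, mul_zero]
  set P' := eval₂ Polynomial.C ![1, Polynomial.X] h with hP'def
  have hP'eval : ∀ x : ℂ, P'.eval x = eval ![1, x] h := by
    intro x
    rw [hP'def, toUniv_eval]
    have hfun : (fun i => Polynomial.eval x (![1, Polynomial.X] i)) = ![1, x] := by
      funext i; fin_cases i <;> simp
    rw [hfun]
  have hP'0 : P' = 0 := by
    apply Polynomial.eq_zero_of_infinite_isRoot
    apply Set.Infinite.mono (s := ({0}ᶜ : Set ℂ))
    · intro x hx
      have hx0 : x ≠ 0 := hx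
      show P'.IsRoot x
      rw [Polynomial.IsRoot, hP'eval]
      exact hbne 1 x hx0
    · exact Set.Finite.infinite_compl (Set.finite_singleton 0)
  have h10 : eval ![(1 : ℂ), 0] h = 0 := by
    rw [← hP'eval 0, hP'0, Polynomial.eval_zero]
  have hall : ∀ a b : ℂ, eval ![a, b] h = 0 := by
    intro a b
    by_cases hb0 : b = 0
    · subst hb0
      by_cases ha0 : a = 0
      · subst ha0
        have hz : ![(0 : ℂ), 0] = (0 : ℂ) • ![1, 1] := by
          funext i; fin_cases i <;> simp
        rw [hz, eval_smul_homog hh, zero_pow (by omega), zero_mul]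
      · have hz : ![a, (0 : ℂ)] = a • ![1, 0] := by
          funext i; fin_cases i <;> simp
        rw [hz, eval_smul_homog hh, h10, mul_zero]
    · exact hbne a b hb0
  refine MvPolynomial.funext fun x => ?_
  have hx : x = ![x 0, x 1] := by
    funext i; fin_cases i <;> rfl
  rw [hx, hall (x 0) (x 1), map_zero]

/-- A bivariate homogeneous polynomial of degree `n ≥ 1` vanishing at `n+1` pairwise
non-proportional nonzero points is zero. -/
lemma homog_eq_zero_of_zeros (n : ℕ) (hn : 1 ≤ n) (h : MvPolynomial (Fin 2) ℂ)
    (hh : h.IsHomogeneous n) (T : Finset (ℂ × ℂ))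
    (hzero : ∀ p ∈ T, eval ![p.1, p.2] h = 0)
    (hnz : ∀ p ∈ T, p ≠ 0)
    (hprop : ∀ p ∈ T, ∀ q ∈ T, (∃ c : ℂ, q = c • p) → p = q)
    (hcard : n + 1 ≤ T.card) : h = 0 := by
  classical
  obtain ⟨ε, hε⟩ := Infinite.exists_notMem_finset (T.image fun p => p.2 / p.1)
  have hkey : ∀ p ∈ T, p.2 - ε * p.1 ≠ 0 := by
    intro p hp
    by_cases h1 : p.1 = 0
    · have h2 : p.2 ≠ 0 := by
        intro h2
        exact hnz p hp (Prod.ext h1 h2)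
      simpa [h1] using h2
    · intro hc
      apply hε
      refine Finset.mem_image.mpr ⟨p, hp, ?_⟩
      rw [div_eq_iff h1]
      have := sub_eq_zero.mp hc
      linear_combination this
  set g : Fin 2 → MvPolynomial (Fin 2) ℂ := ![X 0, C ε * X 0 + X 1] with hgdef
  set h' := aeval g h with hh'def
  have hgh : ∀ i, (g i).IsHomogeneous 1 := by
    rw [hgdef]
    intro i
    fin_cases i
    · simpa using isHomogeneous_X ℂ (0 : Fin 2)
    · simpa using (isHomogeneous_C_mul_X ε (0 : Fin 2)).add (isHomogeneous_X ℂ (1 : Fin 2))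
  have hh' : h'.IsHomogeneous n := by
    have := hh.aeval g hgh
    rwa [one_mul] at this
  have heval' : ∀ a b : ℂ, eval ![a, b] h' = eval ![a, ε * a + b] h := by
    intro a b
    rw [hh'def, eval_aeval']
    have hfun : (fun i => eval ![a, b] (g i)) = ![a, ε * a + b] := by
      funext i; fin_cases i <;> simp [hgdef]
    rw [hfun]
  set T' := T.image (fun p : ℂ × ℂ => (p.1, p.2 - ε * p.1)) with hT'def
  have hmapinj : Function.Injective (fun p : ℂ × ℂ => (p.1, p.2 - ε * p.1)) := by
    rintro ⟨a, b⟩ ⟨c, d⟩ hcd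
    simp only [Prod.mk.injEq] at hcd ⊢
    obtain ⟨h1, h2⟩ := hcd
    subst h1
    exact ⟨rfl, by linear_combination h2⟩
  have h'0 : h' = 0 := by
    refine homog_eq_zero_of_zeros_snd_ne n hn h' hh' T' ?_ ?_ ?_ ?_
    · rintro q hq
      obtain ⟨p, hp, rfl⟩ := Finset.mem_image.mp hq
      show eval ![p.1, p.2 - ε * p.1] h' = 0
      rw [heval']
      have harg : ε * p.1 + (p.2 - ε * p.1) = p.2 := by ring
      rw [harg]
      exact hzero p hp
    · rintro q hq
      obtain ⟨p, hp, rfl⟩ := Finset.mem_image.mp hq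
      exact hkey p hp
    · rintro q hq q' hq' ⟨c, hc⟩
      obtain ⟨p, hp, rfl⟩ := Finset.mem_image.mp hq
      obtain ⟨p', hp', rfl⟩ := Finset.mem_image.mp hq'
      have h1 : p'.1 = c * p.1 := by
        have := congrArg Prod.fst hc
        simpa using this
      have h2 : p'.2 - ε * p'.1 = c * (p.2 - ε * p.1) := by
        have := congrArg Prod.snd hc
        simpa using this
      have h3 : p'.2 = c * p.2 := by linear_combination h2 + ε * h1
      have hps : p' = c • p := by
        rw [Prod.smul_def, smul_eq_mul, smul_eq_mul]
        exact Prod.ext h1 h3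
      have := hprop p hp p' hp' ⟨c, hps⟩
      rw [this]
    · rw [hT'def, Finset.card_image_of_injective _ hmapinj]
      exact hcard
  have hall : ∀ a b : ℂ, eval ![a, b] h = 0 := by
    intro a b
    have hev := heval' a (b - ε * a)
    have harg : ε * a + (b - ε * a) = b := by ring
    rw [harg] at hev
    rw [← hev, h'0, map_zero]
  refine MvPolynomial.funext fun x => ?_
  have hx : x = ![x 0, x 1] := by
    funext i; fin_cases i <;> rfl
  rw [hx, hall (x 0) (x 1), map_zero]

end CurvePencilAux

open CurvePencilAux

/-- A rational curve of degree `d` in `ℙ³(ℂ)` passing through at least `2d`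
points of the base locus of a pencil of quadrics, and not contained in the base locus,
lies on a member of the pencil. -/
theorem curve_lies_on_member_of_pencil (d : ℕ) (hd : 1 ≤ d)
    (q₁ q₂ : MvPolynomial (Fin 4) ℂ)
    (hq₁ : q₁.IsHomogeneous 2) (hq₂ : q₂.IsHomogeneous 2)
    (f : Fin 4 → MvPolynomial (Fin 2) ℂ)
    (hf : ∀ i, (f i).IsHomogeneous d)
    (hne : ∃ i, f i ≠ 0) :
    let C : Set (Projectivization ℂ (Fin 4 → ℂ)) :=
      {x | ∃ (a b : ℂ) (h : (fun i => eval ![a, b] (f i)) ≠ 0),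
        x = Projectivization.mk ℂ _ h}
    let B : Set (Projectivization ℂ (Fin 4 → ℂ)) :=
      {x | eval x.rep q₁ = 0 ∧ eval x.rep q₂ = 0}
    ∀ S : Finset (Projectivization ℂ (Fin 4 → ℂ)),
      ↑S ⊆ C ∩ B → S.card = 2 * d → ¬ C ⊆ B →
      ∃ lam mu : ℂ, (lam, mu) ≠ (0, 0) ∧
        aeval f (lam • q₁ + mu • q₂) = 0 ∧
        C ⊆ {x | eval x.rep (lam • q₁ + mu • q₂) = 0} := by
  classical
  intro C B S hS hScard hCB
  set g₁ := aeval f q₁ with hg₁def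
  set g₂ := aeval f q₂ with hg₂def
  have hg₁ : g₁.IsHomogeneous (2 * d) := by
    have := hq₁.aeval f hf
    rwa [mul_comm d 2] at this
  have hg₂ : g₂.IsHomogeneous (2 * d) := by
    have := hq₂.aeval f hf
    rwa [mul_comm d 2] at this
  -- the evaluation bridge between `ℙ³` points and parameters
  have hbridge : ∀ (Q : MvPolynomial (Fin 4) ℂ) (m : ℕ), Q.IsHomogeneous m →
      ∀ (a b : ℂ) (hv : (fun i => eval ![a, b] (f i)) ≠ 0),
      (eval (Projectivization.mk ℂ _ hv).rep Q = 0 ↔ eval ![a, b] (aeval f Q) = 0) := by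
    intro Q m hQ a b hv
    obtain ⟨c, hc⟩ := Projectivization.exists_smul_eq_mk_rep ℂ _ hv
    rw [← hc, Units.smul_def, eval_smul_homog hQ, eval_aeval']
    constructor
    · intro h0
      rcases mul_eq_zero.mp h0 with h0 | h0
      · exact absurd h0 (pow_ne_zero _ (Units.ne_zero c))
      · exact h0
    · intro h0
      rw [h0, mul_zero]
  have hBmem : ∀ (a b : ℂ) (hv : (fun i => eval ![a, b] (f i)) ≠ 0),
      (Projectivization.mk ℂ _ hv ∈ B ↔ (eval ![a, b] g₁ = 0 ∧ eval ![a, b] g₂ = 0)) := by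
    intro a b hv
    constructor
    · rintro ⟨h1, h2⟩
      exact ⟨(hbridge q₁ 2 hq₁ a b hv).mp h1, (hbridge q₂ 2 hq₂ a b hv).mp h2⟩
    · rintro ⟨h1, h2⟩
      exact ⟨(hbridge q₁ 2 hq₁ a b hv).mpr h1, (hbridge q₂ 2 hq₂ a b hv).mpr h2⟩
  -- choose parameters for the points of `C`
  have hCex : ∀ x : Projectivization ℂ (Fin 4 → ℂ), x ∈ C →
      ∃ p : ℂ × ℂ, ∃ hv : (fun i => eval ![p.1, p.2] (f i)) ≠ 0,
        x = Projectivization.mk ℂ _ hv := by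
    rintro x ⟨a, b, hv, rfl⟩
    exact ⟨(a, b), hv, rfl⟩
  choose! par hpar hparmk using hCex
  have hparamnz : ∀ p : ℂ × ℂ, (fun i => eval ![p.1, p.2] (f i)) ≠ 0 → p ≠ 0 := by
    intro p hv hp0
    apply hv
    subst hp0
    funext i
    show eval ![(0 : ℂ), 0] (f i) = 0
    have hz : ![(0 : ℂ), 0] = (0 : ℂ) • ![1, 1] := by
      funext j; fin_cases j <;> simp
    rw [hz, eval_smul_homog (hf i), zero_pow (by omega), zero_mul]
  have hsame : ∀ (p p' : ℂ × ℂ) (hv : (fun i => eval ![p.1, p.2] (f i)) ≠ 0)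
      (hv' : (fun i => eval ![p'.1, p'.2] (f i)) ≠ 0) (c : ℂ), p' = c • p →
      Projectivization.mk ℂ _ hv' = Projectivization.mk ℂ _ hv := by
    intro p p' hv hv' c hc
    have hc' : p'.1 = c * p.1 ∧ p'.2 = c * p.2 := by
      constructor
      · have := congrArg Prod.fst hc; simpa using this
      · have := congrArg Prod.snd hc; simpa using this
    have hc0 : c ≠ 0 := by
      rintro rfl
      apply hparamnz p' hv'
      have : p' = ((0 : ℂ) * p.1, (0 : ℂ) * p.2) := Prod.ext hc'.1 hc'.2
      rw [this]
      simp
    have hvec : ![p'.1, p'.2] = c • ![p.1, p.2] := by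
      funext j; fin_cases j <;> simp [hc'.1, hc'.2]
    have hvv : (fun i => eval ![p'.1, p'.2] (f i))
        = (c ^ d) • (fun i => eval ![p.1, p.2] (f i)) := by
      funext i
      rw [Pi.smul_apply, smul_eq_mul, hvec, eval_smul_homog (hf i)]
    exact (Projectivization.mk_eq_mk_iff' ℂ _ _ hv' hv).mpr ⟨c ^ d, hvv.symm⟩
  obtain ⟨x₀, hx₀C, hx₀B⟩ := Set.not_subset.mp hCB
  set p₀ := par x₀ with hp₀def
  set lam := eval ![p₀.1, p₀.2] g₂ with hlamdef
  set mu := -(eval ![p₀.1, p₀.2] g₁) with hmudef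
  have hv₀ := hpar x₀ hx₀C
  have hmk₀ := hparmk x₀ hx₀C
  have hp₀B : ¬ (eval ![p₀.1, p₀.2] g₁ = 0 ∧ eval ![p₀.1, p₀.2] g₂ = 0) := by
    intro hcontra
    apply hx₀B
    rw [hmk₀]
    exact (hBmem _ _ hv₀).mpr hcontra
  have hlm : (lam, mu) ≠ (0, 0) := by
    intro hlm0
    have h1 : lam = 0 := congrArg Prod.fst hlm0
    have h2 : mu = 0 := congrArg Prod.snd hlm0
    apply hp₀B
    constructor
    · rw [hmudef] at h2
      exact neg_eq_zero.mp h2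
    · exact h1
  set hpoly := lam • g₁ + mu • g₂ with hhpolydef
  have hhom : hpoly.IsHomogeneous (2 * d) := by
    rw [hhpolydef, smul_eq_C_mul, smul_eq_C_mul]
    exact (hg₁.C_mul lam).add (hg₂.C_mul mu)
  set Xs := insert x₀ S with hXsdef
  have hXsC : ∀ x ∈ Xs, x ∈ C := by
    intro x hx
    rcases Finset.mem_insert.mp hx with rfl | hx
    · exact hx₀C
    · exact (hS hx).1
  set T := Xs.image par with hTdef
  have hTprop' : ∀ x ∈ Xs, ∀ y ∈ Xs, (∃ c : ℂ, par y = c • par x) → x = y := by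
    rintro x hx y hy ⟨c, hc⟩
    have h1 := hparmk x (hXsC x hx)
    have h2 := hparmk y (hXsC y hy)
    rw [h1, h2]
    exact (hsame (par x) (par y) (hpar x (hXsC x hx)) (hpar y (hXsC y hy)) c hc).symm
  have hTprop : ∀ p ∈ T, ∀ q ∈ T, (∃ c : ℂ, q = c • p) → p = q := by
    rintro p hp q hq hcq
    obtain ⟨x, hx, rfl⟩ := Finset.mem_image.mp hp
    obtain ⟨y, hy, rfl⟩ := Finset.mem_image.mp hq
    rw [hTprop' x hx y hy hcq]
  have hx₀S : x₀ ∉ S := by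
    intro hx₀S
    exact hx₀B (hS hx₀S).2
  have hTcard : 2 * d + 1 ≤ T.card := by
    rw [hTdef]
    rw [Finset.card_image_of_injOn (fun x hx y hy hxy =>
      hTprop' x hx y hy ⟨1, by rw [hxy, one_smul]⟩)]
    rw [hXsdef, Finset.card_insert_of_notMem hx₀S, hScard]
  have hTzero : ∀ p ∈ T, eval ![p.1, p.2] hpoly = 0 := by
    intro p hp
    obtain ⟨x, hx, rfl⟩ := Finset.mem_image.mp hp
    have hxC := hXsC x hx
    rcases Finset.mem_insert.mp hx with rfl | hxS
    · rw [hhpolydef, smul_eq_C_mul, smul_eq_C_mul]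
      simp only [eval_add, eval_mul, eval_C]
      rw [hlamdef, hmudef, ← hp₀def]
      ring
    · have hxB : Projectivization.mk ℂ _ (hpar x hxC) ∈ B := by
        rw [← hparmk x hxC]
        exact (hS hxS).2
      have := (hBmem _ _ (hpar x hxC)).mp hxB
      rw [hhpolydef, smul_eq_C_mul, smul_eq_C_mul]
      simp only [eval_add, eval_mul, eval_C]
      rw [this.1, this.2]
      ring
  have hTnz : ∀ p ∈ T, p ≠ 0 := by
    intro p hp
    obtain ⟨x, hx, rfl⟩ := Finset.mem_image.mp hp
    exact hparamnz (par x) (hpar x (hXsC x hx))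
  have hzero : hpoly = 0 :=
    homog_eq_zero_of_zeros (2 * d) (by omega) hpoly hhom T hTzero hTnz hTprop hTcard
  have haeval : aeval f (lam • q₁ + mu • q₂) = hpoly := by
    rw [hhpolydef, hg₁def, hg₂def]
    simp [map_add, map_smul]
  refine ⟨lam, mu, hlm, ?_, ?_⟩
  · rw [haeval, hzero]
  · rintro x ⟨a, b, hv, rfl⟩
    have hQhom : (lam • q₁ + mu • q₂).IsHomogeneous 2 := by
      rw [smul_eq_C_mul, smul_eq_C_mul]
      exact (hq₁.C_mul lam).add (hq₂.C_mul mu)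
    show eval (Projectivization.mk ℂ _ hv).rep (lam • q₁ + mu • q₂) = 0
    apply (hbridge _ 2 hQhom a b hv).mpr
    rw [haeval, hzero, map_zero]
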